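/- Let G be a finite abelian group of order v and D a k-subset of G with D = −D and 0 ∉ D, where k, λ, μ are positive integers satisfying k^2 = k + λk + μ(v−k−1). Then D is a (v,k,λ,μ) partial difference set in G if and only if for every nonprincipal character χ of G, the character sum χ(D) = Σ_{d∈D} χ(d) lies in { (λ−μ ± √((μ−λ)^2 + 4(k−μ)))/2 }. -/

import Mathlib

open Finset

lemma addChar_nonprin_iff {G : Type} [AddCommGroup G] (χ : AddChar G ℂ) :
    (∃ a : G, χ a ≠ 1) ↔ χ ≠ 0 := by
  constructor
  · rintro ⟨a, ha⟩ rfl; exact ha rfl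
  · intro h
    by_contra hc
    push_neg at hc
    exact h (DFunLike.ext _ _ fun a => by simpa using hc a)

lemma sum_neg_eq {G : Type} [AddCommGroup G] [DecidableEq G] (D : Finset G)
    (hsym : ∀ d ∈ D, -d ∈ D) (χ : AddChar G ℂ) :
    ∑ d ∈ D, χ (-d) = ∑ d ∈ D, χ d := by
  apply Finset.sum_nbij' (fun d => -d) (fun d => -d) <;> simp_all

lemma sum_sq_eq {G : Type} [AddCommGroup G] [Fintype G] [DecidableEq G]
    (D : Finset G) (hsym : ∀ d ∈ D, -d ∈ D) (χ : AddChar G ℂ) :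
    (∑ d ∈ D, χ d) ^ 2
      = ∑ g : G, (((D ×ˢ D).filter (fun q => q.1 - q.2 = g)).card : ℂ) * χ g := by
  have h1 : ∀ g : G, (((D ×ˢ D).filter (fun q => q.1 - q.2 = g)).card : ℂ) * χ g
      = ∑ q ∈ (D ×ˢ D).filter (fun q => q.1 - q.2 = g), χ (q.1 - q.2) := by
    intro g
    rw [Finset.sum_congr rfl (fun q hq => by rw [(Finset.mem_filter.1 hq).2]),
      Finset.sum_const, nsmul_eq_mul]
  simp_rw [h1]
  rw [Finset.sum_fiberwise (D ×ˢ D) (fun q => q.1 - q.2) (fun q => χ (q.1 - q.2)),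
    Finset.sum_product]
  simp_rw [sub_eq_add_neg, AddChar.map_add_eq_mul, ← Finset.mul_sum,
    sum_neg_eq D hsym χ, ← Finset.sum_mul, sq]

lemma M_sum_all {G : Type} [AddCommGroup G] [Fintype G] [DecidableEq G]
    (D : Finset G) (h0 : (0:G) ∉ D) (k l μ : ℕ) (χ : AddChar G ℂ) :
    ∑ g : G, (if g = 0 then (k:ℂ) else if g ∈ D then (l:ℂ) else (μ:ℂ)) * χ g
      = (μ:ℂ) * (∑ g : G, χ g) + ((k:ℂ) - μ) + ((l:ℂ) - μ) * (∑ d ∈ D, χ d) := by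
  have hpt : ∀ g : G, (if g = 0 then (k:ℂ) else if g ∈ D then (l:ℂ) else (μ:ℂ)) * χ g
      = (μ:ℂ) * χ g + (if g = 0 then ((k:ℂ)-μ) * χ g else 0)
        + (if g ∈ D then ((l:ℂ)-μ) * χ g else 0) := by
    intro g
    by_cases hg : g = 0
    · subst hg; simp [h0]
    · by_cases hgD : g ∈ D <;> simp [hg, hgD] <;> ring
  simp_rw [hpt]
  rw [Finset.sum_add_distrib, Finset.sum_add_distrib, ← Finset.mul_sum,
    Finset.sum_ite_eq' univ (0:G) (fun g => ((k:ℂ)-μ) * χ g)]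
  simp only [mem_univ, if_true, AddChar.map_zero_eq_one, mul_one]
  rw [Finset.sum_ite_mem, Finset.univ_inter, ← Finset.mul_sum]

lemma N_zero {G : Type} [AddCommGroup G] [Fintype G] [DecidableEq G] (D : Finset G) :
    ((D ×ˢ D).filter (fun q => q.1 - q.2 = 0)).card = D.card := by
  rw [show (D ×ˢ D).filter (fun q => q.1 - q.2 = 0) = D.image (fun d => (d, d)) by
    ext ⟨a, b⟩
    simp only [mem_filter, mem_product, mem_image, sub_eq_zero, Prod.mk.injEq]
    constructor
    · rintro ⟨⟨ha, _⟩, rfl⟩; exact ⟨a, ha, rfl, rfl⟩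
    · rintro ⟨d, hd, rfl, rfl⟩; exact ⟨⟨hd, hd⟩, rfl⟩]
  exact Finset.card_image_of_injective _ (fun a b h => (Prod.mk.injEq _ _ _ _ ▸ h).1)

lemma sum_N {G : Type} [AddCommGroup G] [Fintype G] [DecidableEq G] (D : Finset G) :
    ∑ g : G, (((D ×ˢ D).filter (fun q => q.1 - q.2 = g)).card : ℂ) = (D.card : ℂ)^2 := by
  rw [← Nat.cast_sum]
  norm_cast
  rw [sq, ← Finset.card_product D D]
  exact (Finset.card_eq_sum_card_fiberwise (fun q _ => mem_univ _)).symm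

lemma disc_nonneg (k l μ v : ℕ) (hk : 0 < k) (hμ : 0 < μ) (hkv : k + 1 ≤ v)
    (hparam : (k : ℤ) ^ 2 = k + l * k + μ * (v - k - 1)) :
    0 ≤ ((μ:ℝ) - l) ^ 2 + 4 * ((k:ℝ) - μ) := by
  have key : (0:ℤ) ≤ ((μ:ℤ) - l) ^ 2 + 4 * ((k:ℤ) - μ) := by
    have h1 : (0:ℤ) ≤ (μ:ℤ) * ((v:ℤ) - k - 1) := by
      apply mul_nonneg (by positivity)
      have : (k:ℤ) + 1 ≤ v := by exact_mod_cast hkv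
      linarith
    have h2 : (μ:ℤ) * ((v:ℤ) - k - 1) = k * ((k:ℤ) - 1 - l) := by linarith [hparam]
    have hl1 : (l:ℤ) ≤ (k:ℤ) - 1 := by nlinarith [hk, (by exact_mod_cast hk : (0:ℤ) < k)]
    rcases le_or_gt (μ:ℤ) (k:ℤ) with h | h
    · nlinarith
    · nlinarith [sq_nonneg ((μ:ℤ) - k - 1),
        mul_nonneg (show (0:ℤ) ≤ (k:ℤ) - 1 - l by linarith)
          (show (0:ℤ) ≤ 2*(μ:ℤ) - l - k + 1 by linarith)]
  have h3 : ((0:ℤ):ℝ) ≤ ((((μ:ℤ) - l) ^ 2 + 4 * ((k:ℤ) - μ) : ℤ) : ℝ) := Int.cast_le.2 key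
  push_cast at h3
  linarith

lemma quad_iff (x : ℂ) (c e s : ℝ) (hs : s^2 = c^2 + 4*e) :
    x^2 = c*x + e ↔ (x = (((c+s)/2 : ℝ) : ℂ) ∨ x = (((c-s)/2 : ℝ) : ℂ)) := by
  have hsC : ((s:ℂ))^2 = (c:ℂ)^2 + 4*(e:ℂ) := by exact_mod_cast hs
  constructor
  · intro h
    have hfac : (x - ((c:ℂ)+s)/2) * (x - ((c:ℂ)-s)/2) = 0 := by
      linear_combination h - hsC/4
    rcases mul_eq_zero.1 hfac with h' | h'
    · left; push_cast; linear_combination h'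
    · right; push_cast; linear_combination h'
  · rintro (h | h) <;> (rw [h]; push_cast; linear_combination hsC/4)

/-- D is a (v,k,λ,μ) partial difference set in the finite abelian group G. -/
def IsPDS {G : Type} [AddCommGroup G] [Fintype G] [DecidableEq G]
    (D : Finset G) (v k l μ : ℕ) : Prop :=
  Fintype.card G = v ∧ D.card = k ∧
    ∀ g : G, g ≠ 0 →
      ((D ×ˢ D).filter (fun q => q.1 - q.2 = g)).card = if g ∈ D then l else μ

/-- Let G be a finite abelian group of order v and D a k-subset with
D = −D, 0 ∉ D, and k² = k + λk + μ(v−k−1). Then D is a (v,k,λ,μ) PDS iff every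
nonprincipal character χ of G has χ(D) ∈ {(λ−μ ± √((μ−λ)² + 4(k−μ)))/2}. -/
theorem denniston_stmt14 (G : Type) [AddCommGroup G] [Fintype G] [DecidableEq G]
    (v k l μ : ℕ) (hk : 0 < k) (hl : 0 < l) (hμ : 0 < μ)
    (hv : Fintype.card G = v)
    (hparam : (k : ℤ) ^ 2 = k + l * k + μ * (v - k - 1))
    (D : Finset G) (hcard : D.card = k)
    (hsym : ∀ d ∈ D, -d ∈ D) (h0 : (0 : G) ∉ D) :
    IsPDS D v k l μ ↔
      ∀ χ : AddChar G ℂ, (∃ a : G, χ a ≠ 1) →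
        (∑ d ∈ D, χ d
            = ((((l : ℝ) - μ) + Real.sqrt (((μ : ℝ) - l) ^ 2 + 4 * ((k : ℝ) - μ))) / 2 : ℝ) ∨
         ∑ d ∈ D, χ d
            = ((((l : ℝ) - μ) - Real.sqrt (((μ : ℝ) - l) ^ 2 + 4 * ((k : ℝ) - μ))) / 2 : ℝ)) := by
  -- basic facts
  have hkv : k + 1 ≤ v := by
    have hsub : D ⊆ univ.erase (0 : G) := fun d hd => mem_erase.2 ⟨fun h => h0 (h ▸ hd), mem_univ d⟩
    have h1 := Finset.card_le_card hsub
    rw [Finset.card_erase_of_mem (mem_univ _), Finset.card_univ, hv, hcard] at h1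
    have h2 : 0 < v := hv ▸ Fintype.card_pos
    omega
  have hd0 : 0 ≤ ((μ:ℝ) - l) ^ 2 + 4 * ((k:ℝ) - μ) := disc_nonneg k l μ v hk hμ hkv hparam
  set s : ℝ := Real.sqrt (((μ:ℝ) - l) ^ 2 + 4 * ((k:ℝ) - μ)) with hs_def
  have hs : s ^ 2 = ((l:ℝ) - μ)^2 + 4 * ((k:ℝ) - μ) := by
    rw [hs_def, Real.sq_sqrt hd0]; ring
  have hquad := fun x : ℂ => quad_iff x ((l:ℝ) - μ) ((k:ℝ) - μ) s hs
  have hparamC : (k:ℂ)^2 = k + l*k + μ*((v:ℂ) - k - 1) := by exact_mod_cast hparam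
  constructor
  · -- PDS → character condition
    rintro ⟨-, -, hcount⟩ χ hχ'
    have hχ : χ ≠ 0 := (addChar_nonprin_iff χ).1 hχ'
    have hzero : ∑ g : G, χ g = 0 := AddChar.sum_eq_zero_iff_ne_zero.2 hχ
    have hx : (∑ d ∈ D, χ d)^2 = (((l:ℝ) - μ : ℝ) : ℂ) * (∑ d ∈ D, χ d) + (((k:ℝ) - μ : ℝ) : ℂ) := by
      rw [sum_sq_eq D hsym χ,
        show ∑ g : G, (((D ×ˢ D).filter (fun q => q.1 - q.2 = g)).card : ℂ) * χ g
          = ∑ g : G, (if g = 0 then (k:ℂ) else if g ∈ D then (l:ℂ) else (μ:ℂ)) * χ g from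
        Finset.sum_congr rfl (fun g _ => by
          congr 1
          by_cases hg : g = 0
          · subst hg; rw [N_zero, hcard]; simp
          · rw [hcount g hg]; simp [hg, apply_ite (Nat.cast : ℕ → ℂ)]),
        M_sum_all D h0 k l μ χ, hzero]
      push_cast
      ring
    exact (hquad _).1 hx
  · -- character condition → PDS
    intro h
    refine ⟨hv, hcard, fun g hg => ?_⟩
    -- Fourier coefficients of N − M all vanish
    have claim : ∀ χ : AddChar G ℂ,
        ∑ a : G, ((((D ×ˢ D).filter (fun q => q.1 - q.2 = a)).card : ℂ)
          - (if a = 0 then (k:ℂ) else if a ∈ D then (l:ℂ) else (μ:ℂ))) * χ a = 0 := by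
      intro χ
      simp_rw [sub_mul]
      rw [Finset.sum_sub_distrib, sub_eq_zero]
      by_cases hχ : χ = 0
      · subst hχ
        rw [M_sum_all D h0 k l μ 0]
        simp only [AddChar.coe_zero, Pi.one_apply, mul_one, Finset.sum_const,
          Finset.card_univ, hv, nsmul_eq_mul]
        rw [sum_N D, hcard]
        linear_combination hparamC
      · have hχ' : ∃ a : G, χ a ≠ 1 := (addChar_nonprin_iff χ).2 hχ
        have hzero : ∑ a : G, χ a = 0 := AddChar.sum_eq_zero_iff_ne_zero.2 hχ
        have hx : (∑ d ∈ D, χ d)^2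
            = (((l:ℝ) - μ : ℝ) : ℂ) * (∑ d ∈ D, χ d) + (((k:ℝ) - μ : ℝ) : ℂ) :=
          (hquad _).2 (h χ hχ')
        rw [← sum_sq_eq D hsym χ, M_sum_all D h0 k l μ χ, hzero, hx]
        push_cast
        ring
    -- Fourier inversion: N = M pointwise
    have hinv : ∀ a : G,
        (((D ×ˢ D).filter (fun q => q.1 - q.2 = a)).card : ℂ)
          = (if a = 0 then (k:ℂ) else if a ∈ D then (l:ℂ) else (μ:ℂ)) := by
      intro a
      set f : G → ℂ := fun b => (((D ×ˢ D).filter (fun q => q.1 - q.2 = b)).card : ℂ)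
        - (if b = 0 then (k:ℂ) else if b ∈ D then (l:ℂ) else (μ:ℂ)) with hf_def
      have h1 : ∑ χ : AddChar G ℂ, (∑ b : G, f b * χ b) * χ (-a) = 0 := by
        simp only [show ∀ χ : AddChar G ℂ, ∑ b : G, f b * χ b = 0 from claim, zero_mul, Finset.sum_const_zero]
      have h2 : ∑ χ : AddChar G ℂ, (∑ b : G, f b * χ b) * χ (-a)
          = ∑ b : G, f b * (if b - a = 0 then ((Fintype.card G : ℂ)) else 0) := by
        simp_rw [Finset.sum_mul]
        rw [Finset.sum_comm]
        refine Finset.sum_congr rfl fun b _ => ?_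
        rw [← AddChar.sum_apply_eq_ite (b - a), Finset.mul_sum]
        refine Finset.sum_congr rfl fun χ _ => ?_
        rw [mul_assoc, ← AddChar.map_add_eq_mul, ← sub_eq_add_neg]
      rw [h2] at h1
      simp_rw [sub_eq_zero, mul_ite, mul_zero] at h1
      rw [Finset.sum_ite_eq' univ a (fun b => f b * (Fintype.card G : ℂ))] at h1
      simp only [mem_univ, if_true] at h1
      have hfa : f a = 0 := by
        have hvne : ((Fintype.card G : ℂ)) ≠ 0 := by
          exact_mod_cast (Nat.cast_ne_zero (R := ℂ)).2 Fintype.card_ne_zero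
        exact (mul_eq_zero.1 h1).resolve_right hvne
      rw [hf_def] at hfa
      exact sub_eq_zero.1 hfa
    have := hinv g
    rw [if_neg hg] at this
    by_cases hgD : g ∈ D
    · rw [if_pos hgD] at this ⊢
      exact_mod_cast this
    · rw [if_neg hgD] at this ⊢
      exact_mod_cast this
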